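/- Let K be a field, let φ ∈ G_∞(n,K), and let ψ ∈ G_∞(n,K) be its compositional inverse (φ∘ψ = ψ∘φ = id). Let m ≥ 1 and suppose φ_j = 0 for every degree j ≥ 0 with j ≢ 1 (mod m), i.e. φ = Σ_{k=0}^∞ φ_{mk+1}. Then the inverse has the same form: ψ_j = 0 for every j ≥ 0 with j ≢ 1 (mod m). -/

import Mathlib

noncomputable section

open MvPowerSeries

/-- A system of `n` formal power series in the `n` variables `x₁, …, xₙ` over `K`. -/
abbrev Sys (n : ℕ) (K : Type) [Field K] := Fin n → MvPowerSeries (Fin n) K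

variable {n : ℕ} {K : Type} [Field K]

/-- The degree-`k` homogeneous component `φ_k` of a system `φ`. -/
def homC (k : ℕ) (φ : Sys n K) : Sys n K :=
  fun i => (fun e => if (e.sum fun _ x => x) = k then MvPowerSeries.coeff (R := K) e (φ i) else 0 :
    MvPowerSeries (Fin n) K)

/-- The truncation `φ_{≤ m}` of a system `φ` to total degrees `≤ m`. -/
def truncLE (m : ℕ) (φ : Sys n K) : Sys n K :=
  fun i => (fun e => if (e.sum fun _ x => x) ≤ m then MvPowerSeries.coeff (R := K) e (φ i) else 0 :
    MvPowerSeries (Fin n) K)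

/-- Composition (substitution) `φ ∘ ψ` of systems of formal power series.  The coefficient of a
monomial `e` in `φ ∘ ψ` is computed by substituting `ψ` into a sufficiently large polynomial
truncation of `φ`; this agrees with the usual substitution whenever `ψ` has zero constant term. -/
def comp (φ ψ : Sys n K) : Sys n K :=
  fun i => (fun e =>
    MvPowerSeries.coeff (R := K) e
      (MvPolynomial.eval₂ (MvPowerSeries.C (σ := Fin n) (R := K)) ψ
        (MvPowerSeries.trunc K
          (Finsupp.equivFunOnFinite.symm fun _ => (e.sum fun _ x => x) + 1) (φ i))) :
    MvPowerSeries (Fin n) K)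

/-- The identity system `id = (x₁, …, xₙ)`. -/
def idSys : Sys n K := fun i => MvPowerSeries.X i

/-- The `m`-fold composition `φ^m` of a system with itself (`φ^0 = id`). -/
def iterComp (φ : Sys n K) : ℕ → Sys n K
  | 0 => idSys
  | m + 1 => comp (iterComp φ m) φ

/-- The Jacobian matrix of a system, i.e. its linear part viewed as a matrix. -/
def jac (φ : Sys n K) : Matrix (Fin n) (Fin n) K :=
  fun i j => MvPowerSeries.coeff (R := K) (Finsupp.single j 1) (φ i)

/-- The linear system of power series attached to a matrix `A`. -/
def ofMatrix (A : Matrix (Fin n) (Fin n) K) : Sys n K :=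
  fun i => ∑ j, MvPowerSeries.C (σ := Fin n) (R := K) (A i j) * MvPowerSeries.X j

/-- Auxiliary predicate: every monomial of `g` has degree `≥ w`, and every monomial of
degree `< j + w - 1` has degree `≡ w [MOD m]`. -/
def GoodAux (m j w : ℕ) (g : MvPowerSeries (Fin n) K) : Prop :=
  ∀ f : Fin n →₀ ℕ, MvPowerSeries.coeff (R := K) f g ≠ 0 →
    w ≤ (f.sum fun _ x => x) ∧
      ((f.sum fun _ x => x) + 1 < j + w → (f.sum fun _ x => x) % m = w % m)

lemma goodAux_one (m j : ℕ) : GoodAux (n := n) (K := K) m j 0 1 := by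
  classical
  intro f hf
  rw [MvPowerSeries.coeff_one] at hf
  split_ifs at hf with h0
  · subst h0; simp
  · exact absurd rfl hf

lemma goodAux_mul {m j w₁ w₂ : ℕ} {g₁ g₂ : MvPowerSeries (Fin n) K}
    (h₁ : GoodAux m j w₁ g₁) (h₂ : GoodAux m j w₂ g₂) :
    GoodAux m j (w₁ + w₂) (g₁ * g₂) := by
  classical
  intro f hf
  rw [MvPowerSeries.coeff_mul] at hf
  obtain ⟨p, hp, hne⟩ := Finset.exists_ne_zero_of_sum_ne_zero hf
  rw [Finset.HasAntidiagonal.mem_antidiagonal] at hp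
  have h1 := h₁ p.1 (left_ne_zero_of_mul hne)
  have h2 := h₂ p.2 (right_ne_zero_of_mul hne)
  have hsum : (f.sum fun _ x => x) = (p.1.sum fun _ x => x) + (p.2.sum fun _ x => x) := by
    rw [← hp]; exact Finsupp.sum_add_index' (fun _ => rfl) (fun _ _ _ => rfl)
  constructor
  · rw [hsum]; exact Nat.add_le_add h1.1 h2.1
  · intro hlt
    rw [hsum] at hlt ⊢
    have e1 := h1.2 (by omega)
    have e2 := h2.2 (by omega)
    exact Nat.ModEq.add e1 e2

lemma goodAux_pow {m j : ℕ} {g : MvPowerSeries (Fin n) K} (hg : GoodAux m j 1 g) :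
    ∀ k, GoodAux m j k (g ^ k)
  | 0 => by simpa using goodAux_one m j
  | k + 1 => by simpa [pow_succ] using goodAux_mul (goodAux_pow hg k) hg

lemma goodAux_prod {m j : ℕ} (s : Finset (Fin n)) (w : Fin n → ℕ)
    (g : Fin n → MvPowerSeries (Fin n) K) (hg : ∀ i ∈ s, GoodAux m j (w i) (g i)) :
    GoodAux m j (∑ i ∈ s, w i) (∏ i ∈ s, g i) := by
  classical
  induction s using Finset.cons_induction with
  | empty => simpa using goodAux_one m j
  | cons a s ha ih =>
    rw [Finset.prod_cons, Finset.sum_cons]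
    exact goodAux_mul (hg a (Finset.mem_cons_self a s))
      (ih fun i hi => hg i (Finset.mem_cons_of_mem hi))

lemma apply_le_degSum (f : Fin n →₀ ℕ) (a : Fin n) : f a ≤ f.sum fun _ x => x := by
  classical
  by_cases ha : a ∈ f.support
  · exact Finset.single_le_sum (fun _ _ => Nat.zero_le _) ha
  · simp [Finsupp.notMem_support_iff.mp ha]

lemma eq_single_of_degSum_eq_one {d : Fin n →₀ ℕ} (hd : (d.sum fun _ x => x) = 1) :
    ∃ l, d = Finsupp.single l 1 := by
  classical
  have hne : d.support.Nonempty := by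
    rw [Finsupp.support_nonempty_iff]
    intro h0; rw [h0] at hd; simp at hd
  obtain ⟨a, ha⟩ := hne
  refine ⟨a, ?_⟩
  have hsplit : d a + ∑ x ∈ d.support.erase a, d x = d.sum fun _ x => x :=
    Finset.add_sum_erase _ _ ha
  have ha1 : 1 ≤ d a := Nat.one_le_iff_ne_zero.mpr (Finsupp.mem_support_iff.mp ha)
  have hda : d a = 1 := by omega
  ext b
  by_cases hb : b = a
  · subst hb; simp [hda]
  · rw [Finsupp.single_apply, if_neg (by exact fun h => hb h.symm)]
    by_cases hbs : b ∈ d.support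
    · have : d b ≤ ∑ x ∈ d.support.erase a, d x :=
        Finset.single_le_sum (fun _ _ => Nat.zero_le _)
          (Finset.mem_erase.mpr ⟨hb, hbs⟩)
      omega
    · exact Finsupp.notMem_support_iff.mp hbs

lemma coeff_comp (φ ψ : Sys n K) (i : Fin n) (e : Fin n →₀ ℕ) :
    MvPowerSeries.coeff (R := K) e (comp φ ψ i) =
      MvPowerSeries.coeff (R := K) e
        (MvPolynomial.eval₂ (MvPowerSeries.C (σ := Fin n) (R := K)) ψ
          (MvPowerSeries.trunc K
            (Finsupp.equivFunOnFinite.symm fun _ => (e.sum fun _ x => x) + 1) (φ i))) := by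
  rw [MvPowerSeries.coeff_apply]; rfl

lemma coeff_homC (k : ℕ) (φ : Sys n K) (i : Fin n) (e : Fin n →₀ ℕ) :
    MvPowerSeries.coeff (R := K) e (homC k φ i) =
      if (e.sum fun _ x => x) = k then MvPowerSeries.coeff (R := K) e (φ i) else 0 := by
  rw [MvPowerSeries.coeff_apply]; rfl

/-- If `ψ` is the compositional inverse of `φ ∈ G_∞(n,K)` and all
homogeneous components of `φ` in degrees `j ≢ 1 (mod m)` vanish, then the same holds for
`ψ`. -/
theorem inverse_has_same_support
    (n : ℕ) (K : Type) [Field K] (m : ℕ) (hm : 1 ≤ m)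
    (φ ψ : Sys n K)
    (hφ0 : homC 0 φ = 0) (hψ0 : homC 0 ψ = 0)
    (hinvφ : IsUnit (jac φ).det) (hinvψ : IsUnit (jac ψ).det)
    (h1 : comp φ ψ = idSys) (h2 : comp ψ φ = idSys)
    (h : ∀ j : ℕ, j % m ≠ 1 % m → homC j φ = 0) :
    ∀ j : ℕ, j % m ≠ 1 % m → homC j ψ = 0 := by
  classical
  intro j
  induction j using Nat.strong_induction_on with
  | _ j IH =>
  intro hj
  rcases Nat.lt_or_ge j 2 with hj2 | hj2
  · interval_cases j
    · exact hψ0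
    · exact absurd rfl hj
  -- coefficient-level consequences of the hypotheses
  have hcφ : ∀ (k : ℕ), k % m ≠ 1 % m → ∀ (i : Fin n) (d : Fin n →₀ ℕ),
      (d.sum fun _ x => x) = k → MvPowerSeries.coeff (R := K) d (φ i) = 0 := by
    intro k hk i d hd
    simpa [coeff_homC, hd] using congrArg (MvPowerSeries.coeff (R := K) d) (congrFun (h k hk) i)
  have hcψ0 : ∀ (l : Fin n) (f : Fin n →₀ ℕ),
      (f.sum fun _ x => x) = 0 → MvPowerSeries.coeff (R := K) f (ψ l) = 0 := by
    intro l f hf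
    simpa [coeff_homC, hf] using congrArg (MvPowerSeries.coeff (R := K) f) (congrFun hψ0 l)
  have hcψ : ∀ (k : ℕ), k < j → k % m ≠ 1 % m → ∀ (l : Fin n) (f : Fin n →₀ ℕ),
      (f.sum fun _ x => x) = k → MvPowerSeries.coeff (R := K) f (ψ l) = 0 := by
    intro k hk hkm l f hf
    simpa [coeff_homC, hf] using congrArg (MvPowerSeries.coeff (R := K) f) (congrFun (IH k hk hkm) l)
  -- the components of ψ are "good" in degrees below j
  have gψ : ∀ l : Fin n, GoodAux m j 1 (ψ l) := by
    intro l f hf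
    have hs1 : 1 ≤ f.sum fun _ x => x := by
      rcases Nat.eq_zero_or_pos (f.sum fun _ x => x) with h0 | hpos
      · exact absurd (hcψ0 l f h0) hf
      · exact hpos
    refine ⟨hs1, fun hlt => ?_⟩
    by_contra hmod
    exact hf (hcψ _ (by omega) hmod l f rfl)
  -- the key coefficient computation
  have key : ∀ e : Fin n →₀ ℕ, (e.sum fun _ x => x) = j →
      ∀ i, MvPowerSeries.coeff (R := K) e (ψ i) = 0 := by
    intro e he
    have hlin : ∀ i : Fin n,
        ∑ l : Fin n, jac φ i l * MvPowerSeries.coeff (R := K) e (ψ l) = 0 := by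
      intro i
      have hXe : MvPowerSeries.coeff (R := K) e (MvPowerSeries.X i : MvPowerSeries (Fin n) K) = 0 := by
        rw [MvPowerSeries.coeff_X, if_neg]
        intro hcon
        rw [hcon, Finsupp.sum_single_index rfl] at he
        omega
      have hE : MvPowerSeries.coeff (R := K) e
          (MvPolynomial.eval₂ (MvPowerSeries.C (σ := Fin n) (R := K)) ψ
            (MvPowerSeries.trunc K (Finsupp.equivFunOnFinite.symm fun _ => j + 1) (φ i))) = 0 := by
        have h₁ := congrArg (MvPowerSeries.coeff (R := K) e) (congrFun h1 i)
        rw [coeff_comp, he] at h₁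
        simp only [idSys] at h₁
        exact h₁.trans hXe
      set P : MvPolynomial (Fin n) K :=
        MvPowerSeries.trunc K (Finsupp.equivFunOnFinite.symm fun _ => j + 1) (φ i) with hPdef
      rw [MvPolynomial.eval₂_eq, map_sum] at hE
      simp only [MvPowerSeries.coeff_C_mul] at hE
      -- hE : ∑ d ∈ P.support, P.coeff d * coeff e (∏ …) = 0
      have hPc : ∀ d ∈ P.support, MvPolynomial.coeff d P = MvPowerSeries.coeff (R := K) d (φ i) := by
        intro d hd
        have hne := MvPolynomial.mem_support_iff.mp hd
        rw [hPdef, MvPowerSeries.coeff_trunc] at hne ⊢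
        split_ifs at hne ⊢ with hlt
        · rfl
        · exact absurd rfl hne
      have h0 : ∑ d ∈ P.support,
          MvPowerSeries.coeff (R := K) d (φ i) *
            MvPowerSeries.coeff (R := K) e (∏ l ∈ d.support, ψ l ^ d l) = 0 := by
        rw [← hE]
        exact Finset.sum_congr rfl fun d hd => by rw [hPc d hd]
      -- non-linear terms vanish
      have hvan : ∀ d : Fin n →₀ ℕ, (d.sum fun _ x => x) ≠ 1 →
          MvPowerSeries.coeff (R := K) d (φ i) *
            MvPowerSeries.coeff (R := K) e (∏ l ∈ d.support, ψ l ^ d l) = 0 := by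
        intro d hd1
        by_cases hk : (d.sum fun _ x => x) % m = 1 % m
        · rcases Nat.eq_zero_or_pos (d.sum fun _ x => x) with hk0 | hkpos
          · have hz : MvPowerSeries.coeff (R := K) d (φ i) = 0 := by
              simpa [coeff_homC, hk0] using congrArg (MvPowerSeries.coeff (R := K) d) (congrFun hφ0 i)
            rw [hz, zero_mul]
          · have hk2 : 2 ≤ d.sum fun _ x => x := by omega
            have hgood : GoodAux m j (d.sum fun _ x => x) (∏ l ∈ d.support, ψ l ^ d l) := by
              have := goodAux_prod d.support (fun l => d l) (fun l => ψ l ^ d l)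
                (fun l _ => goodAux_pow (gψ l) (d l))
              simpa [Finsupp.sum] using this
            have hc0 : MvPowerSeries.coeff (R := K) e (∏ l ∈ d.support, ψ l ^ d l) = 0 := by
              by_contra hnz
              obtain ⟨hle, hmod⟩ := hgood e hnz
              rw [he] at hle hmod
              exact hj ((hmod (by omega)).trans hk)
            rw [hc0, mul_zero]
        · rw [hcφ _ hk i d rfl, zero_mul]
      -- reduce the sum to the linear terms
      set T : Finset (Fin n →₀ ℕ) :=
        Finset.image (fun l : Fin n => Finsupp.single l 1) Finset.univ with hTdef
      have hsingle_mem : ∀ l : Fin n, (Finsupp.single l 1 : Fin n →₀ ℕ) ∈ T := by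
        intro l; rw [hTdef]; exact Finset.mem_image_of_mem _ (Finset.mem_univ l)
      have step1 : ∑ d ∈ P.support,
            MvPowerSeries.coeff (R := K) d (φ i) *
              MvPowerSeries.coeff (R := K) e (∏ l ∈ d.support, ψ l ^ d l)
          = ∑ d ∈ P.support ∪ T,
            MvPowerSeries.coeff (R := K) d (φ i) *
              MvPowerSeries.coeff (R := K) e (∏ l ∈ d.support, ψ l ^ d l) := by
        refine Finset.sum_subset Finset.subset_union_left ?_
        intro x hx hxns
        have hxT : x ∈ T := (Finset.mem_union.mp hx).resolve_left hxns
        rw [hTdef, Finset.mem_image] at hxT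
        obtain ⟨l, -, rfl⟩ := hxT
        have hlt : (Finsupp.single l 1 : Fin n →₀ ℕ) <
            Finsupp.equivFunOnFinite.symm fun _ => j + 1 := by
          rw [Finsupp.lt_def]
          constructor
          · intro a
            simp only [Finsupp.coe_equivFunOnFinite_symm]
            calc (Finsupp.single l 1 : Fin n →₀ ℕ) a ≤ 1 := by
                  rw [Finsupp.single_apply]; split <;> omega
              _ ≤ j + 1 := by omega
          · refine ⟨l, ?_⟩
            simp only [Finsupp.coe_equivFunOnFinite_symm, Finsupp.single_eq_same]
            omega
        have hz : MvPowerSeries.coeff (R := K) (Finsupp.single l 1) (φ i) = 0 := by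
          have := MvPolynomial.notMem_support_iff.mp hxns
          rw [hPdef, MvPowerSeries.coeff_trunc, if_pos hlt] at this
          exact this
        rw [hz, zero_mul]
      have step2 : ∑ d ∈ T,
            MvPowerSeries.coeff (R := K) d (φ i) *
              MvPowerSeries.coeff (R := K) e (∏ l ∈ d.support, ψ l ^ d l)
          = ∑ d ∈ P.support ∪ T,
            MvPowerSeries.coeff (R := K) d (φ i) *
              MvPowerSeries.coeff (R := K) e (∏ l ∈ d.support, ψ l ^ d l) := by
        refine Finset.sum_subset Finset.subset_union_right ?_
        intro x hx hxT
        refine hvan x ?_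
        intro hx1
        obtain ⟨l, rfl⟩ := eq_single_of_degSum_eq_one hx1
        exact hxT (hsingle_mem l)
      have step3 : ∑ d ∈ T,
            MvPowerSeries.coeff (R := K) d (φ i) *
              MvPowerSeries.coeff (R := K) e (∏ l ∈ d.support, ψ l ^ d l)
          = ∑ l : Fin n, jac φ i l * MvPowerSeries.coeff (R := K) e (ψ l) := by
        rw [hTdef, Finset.sum_image (fun x _ y _ hxy =>
          Finsupp.single_left_injective one_ne_zero hxy)]
        refine Finset.sum_congr rfl fun l _ => ?_
        congr 1
        rw [Finsupp.support_single_ne_zero l one_ne_zero, Finset.prod_singleton,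
          Finsupp.single_eq_same, pow_one]
      rw [← step3, step2, ← step1]
      exact h0
    -- invert the Jacobian matrix
    have hv : Matrix.mulVec (jac φ) (fun l => MvPowerSeries.coeff (R := K) e (ψ l)) = 0 := by
      funext i'
      simpa [Matrix.mulVec, dotProduct] using hlin i'
    have hAv : (fun l => MvPowerSeries.coeff (R := K) e (ψ l)) = (0 : Fin n → K) := by
      have hinv := Matrix.nonsing_inv_mul (jac φ) hinvφ
      have h2' := congrArg (fun v => Matrix.mulVec (jac φ)⁻¹ v) hv
      simpa [Matrix.mulVec_mulVec, hinv, Matrix.one_mulVec, Matrix.mulVec_zero] using h2'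
    exact fun i => congrFun hAv i
  funext i
  apply MvPowerSeries.ext
  intro e
  rw [Pi.zero_apply, map_zero, coeff_homC]
  split_ifs with he
  · exact key e he i
  · rfl
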